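/- Let z : (0,∞) → ℂ be continuously differentiable with finite X-norm, where ‖z‖_X² = ∫₀^∞ (|z'(ρ)|² + |z(ρ)|²/ρ²) ρ dρ. Then z extends continuously to [0,∞] with z(0) = 0 and z(ρ) → 0 as ρ → ∞, and ‖z‖_{L^∞} ≤ C ‖z‖_X for a universal constant C. -/

import Mathlib

open MeasureTheory Set Filter Topology

/-- Radial Sobolev embedding for the space `X`: if `z : (0,∞) → ℂ` is continuously
differentiable with finite `X`-norm, where
`‖z‖_X² = ∫₀^∞ (|z'(ρ)|² + |z(ρ)|²/ρ²) ρ dρ`, then `z(ρ) → 0` as `ρ → 0⁺` and as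
`ρ → ∞` (so `z` extends continuously by `0`), and `‖z‖_{L^∞} ≤ C ‖z‖_X` for a
universal constant `C`. -/
theorem X_space_embedding :
    ∃ C > (0 : ℝ), ∀ z : ℝ → ℂ,
      ContDiffOn ℝ 1 z (Ioi 0) →
      IntegrableOn (fun ρ => (‖deriv z ρ‖ ^ 2 + ‖z ρ‖ ^ 2 / ρ ^ 2) * ρ) (Ioi 0) volume →
      (Tendsto z (nhdsWithin 0 (Ioi 0)) (nhds 0) ∧
        Tendsto z atTop (nhds 0) ∧
        ∀ ρ ∈ Ioi (0 : ℝ), ‖z ρ‖ ≤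
          C * Real.sqrt (∫ ρ in Ioi (0 : ℝ), (‖deriv z ρ‖ ^ 2 + ‖z ρ‖ ^ 2 / ρ ^ 2) * ρ)) := by
  refine ⟨1, one_pos, fun z hz hint => ?_⟩
  set h : ℝ → ℝ := fun ρ => (‖deriv z ρ‖ ^ 2 + ‖z ρ‖ ^ 2 / ρ ^ 2) * ρ with hh
  set f : ℝ → ℝ := fun ρ => ‖z ρ‖ ^ 2 with hf
  set g : ℝ → ℝ := fun ρ => 2 * (inner ℝ (z ρ) (deriv z ρ) : ℝ) with hg
  have hnn : ∀ ρ ∈ Ioi (0:ℝ), 0 ≤ h ρ := by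
    intro ρ hρ
    have : (0:ℝ) < ρ := hρ
    positivity
  have hfnn : ∀ ρ, 0 ≤ f ρ := fun ρ => sq_nonneg _
  have hzd : ∀ ρ ∈ Ioi (0:ℝ), HasDerivAt z (deriv z ρ) ρ := fun ρ hρ =>
    ((hz.differentiableOn one_ne_zero).differentiableAt (isOpen_Ioi.mem_nhds hρ)).hasDerivAt
  have hfd : ∀ ρ ∈ Ioi (0:ℝ), HasDerivAt f (g ρ) ρ := fun ρ hρ => (hzd ρ hρ).norm_sq
  have hfroot : ∀ ρ, Real.sqrt (f ρ) = ‖z ρ‖ := fun ρ => Real.sqrt_sq (norm_nonneg _)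
  -- pointwise bound ‖g‖ ≤ h on (0, ∞)
  have hgh : ∀ ρ ∈ Ioi (0:ℝ), ‖g ρ‖ ≤ h ρ := by
    intro ρ hρ
    have hρ0 : (0:ℝ) < ρ := hρ
    have h1 : |(inner ℝ (z ρ) (deriv z ρ) : ℝ)| ≤ ‖z ρ‖ * ‖deriv z ρ‖ := abs_real_inner_le_norm _ _
    have h2 : 2 * (‖z ρ‖ * ‖deriv z ρ‖) ≤ h ρ := by
      have key : h ρ - 2 * (‖z ρ‖ * ‖deriv z ρ‖) = (ρ * ‖deriv z ρ‖ - ‖z ρ‖)^2 / ρ := by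
        rw [hh]; field_simp; ring
      nlinarith [div_nonneg (sq_nonneg (ρ * ‖deriv z ρ‖ - ‖z ρ‖)) hρ0.le]
    calc ‖g ρ‖ = 2 * |(inner ℝ (z ρ) (deriv z ρ) : ℝ)| := by
          rw [hg]; simp [Real.norm_eq_abs, abs_mul]
      _ ≤ 2 * (‖z ρ‖ * ‖deriv z ρ‖) := by linarith
      _ ≤ h ρ := h2
  -- integrability of g
  have hgc : ContinuousOn g (Ioi 0) := by
    have h1 : ContinuousOn z (Ioi 0) := hz.continuousOn
    have h2 : ContinuousOn (deriv z) (Ioi 0) := hz.continuousOn_deriv_of_isOpen isOpen_Ioi le_rfl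
    exact continuousOn_const.mul (h1.inner h2)
  have hgint : IntegrableOn g (Ioi 0) volume := by
    refine Integrable.mono' hint (hgc.aestronglyMeasurable measurableSet_Ioi) ?_
    exact (ae_restrict_iff' measurableSet_Ioi).2 (Eventually.of_forall hgh)
  set G : ℝ → ℝ := Set.indicator (Ioi 0) g with hG
  have hGint : Integrable G volume := hgint.integrable_indicator measurableSet_Ioi
  set P : ℝ → ℝ := fun b => ∫ t in (0:ℝ)..b, G t with hP
  have hPc : Continuous P :=
    intervalIntegral.continuous_primitive (fun a b => hGint.intervalIntegrable) 0
  -- FTC on compact subintervals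
  have key : ∀ a ∈ Ioi (0:ℝ), ∀ b ∈ Ioi (0:ℝ), f b - f a = P b - P a := by
    intro a ha b hb
    have hsub : uIcc a b ⊆ Ioi 0 := by
      intro x hx
      rcases mem_uIcc.1 hx with ⟨h1, _⟩ | ⟨h1, _⟩
      exacts [lt_of_lt_of_le ha h1, lt_of_lt_of_le hb h1]
    have hderiv : ∀ x ∈ uIcc a b, HasDerivAt f (G x) x := by
      intro x hx
      have hx0 : x ∈ Ioi (0:ℝ) := hsub hx
      rw [hG, indicator_of_mem hx0 g]
      exact hfd x hx0
    have h1 : ∫ x in a..b, G x = f b - f a :=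
      intervalIntegral.integral_eq_sub_of_hasDerivAt hderiv hGint.intervalIntegrable
    have h2 : P b - P a = ∫ x in a..b, G x :=
      intervalIntegral.integral_interval_sub_left hGint.intervalIntegrable hGint.intervalIntegrable
    rw [h2, h1]
  have h1mem : (1:ℝ) ∈ Ioi (0:ℝ) := mem_Ioi.2 one_pos
  set c : ℝ := f 1 - P 1 with hc
  have hfPc : ∀ ρ ∈ Ioi (0:ℝ), f ρ = P ρ + c := by
    intro ρ hρ
    have := key 1 h1mem ρ hρ
    rw [hc]; linarith
  -- limit at infinity
  set L : ℝ := (∫ x in Ioi (0:ℝ), G x) + c with hL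
  have hLtop : Tendsto f atTop (𝓝 L) := by
    have h1 : Tendsto P atTop (𝓝 (∫ x in Ioi (0:ℝ), G x)) :=
      intervalIntegral_tendsto_integral_Ioi 0 hGint.integrableOn tendsto_id
    refine (h1.add_const c).congr' ?_
    filter_upwards [eventually_gt_atTop 0] with b hb
    exact (hfPc b hb).symm
  -- limit at zero
  have hc0 : Tendsto f (𝓝[>] (0:ℝ)) (𝓝 c) := by
    have h1 : Tendsto P (𝓝[>] (0:ℝ)) (𝓝 (P 0)) := (hPc.tendsto 0).mono_left nhdsWithin_le_nhds
    have hP0 : P 0 = 0 := intervalIntegral.integral_same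
    have h2 : Tendsto (fun a => P a + c) (𝓝[>] (0:ℝ)) (𝓝 c) := by
      simpa [hP0] using h1.add_const c
    refine h2.congr' ?_
    filter_upwards [self_mem_nhdsWithin] with a ha
    exact (hfPc a ha).symm
  -- the limits are 0
  have hLnn : 0 ≤ L := ge_of_tendsto hLtop (Eventually.of_forall hfnn)
  have hcnn : 0 ≤ c := ge_of_tendsto hc0 (Eventually.of_forall hfnn)
  have hfdivρ : ∀ ρ ∈ Ioi (0:ℝ), f ρ / ρ ≤ h ρ := by
    intro ρ hρ
    have hρ0 : (0:ℝ) < ρ := hρ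
    have e : h ρ = ‖deriv z ρ‖ ^ 2 * ρ + f ρ / ρ := by
      rw [hh, hf]; field_simp
    rw [e]
    nlinarith [mul_nonneg (sq_nonneg ‖deriv z ρ‖) hρ0.le]
  have hLz : L = 0 := by
    by_contra hne
    have hLpos : 0 < L := lt_of_le_of_ne hLnn (Ne.symm hne)
    have hev : ∀ᶠ ρ in atTop, L / 2 < f ρ := hLtop.eventually (eventually_gt_nhds (by linarith))
    obtain ⟨R, hR⟩ := (hev.and (eventually_ge_atTop 1)).exists_forall_of_atTop
    have hR0 : (0:ℝ) < R ⊔ 1 := lt_of_lt_of_le one_pos le_sup_right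
    have hinv : IntegrableOn (fun ρ : ℝ => ρ⁻¹) (Ioi (R ⊔ 1)) volume := by
      refine Integrable.mono' (((hint.mono_set (Ioi_subset_Ioi hR0.le)).const_mul (2 / L)))
        (measurable_inv.aestronglyMeasurable) ?_
      refine (ae_restrict_iff' measurableSet_Ioi).2 (Eventually.of_forall ?_)
      intro ρ hρ
      have hρR : R ⊔ 1 < ρ := hρ
      have hρ0 : (0:ℝ) < ρ := lt_trans hR0 hρR
      obtain ⟨hf2, -⟩ := hR ρ (le_of_lt (lt_of_le_of_lt le_sup_left hρR))
      have h3 : f ρ / ρ ≤ h ρ := hfdivρ ρ hρ0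
      have h4 : (L / 2) / ρ ≤ h ρ := le_trans (by gcongr) h3
      rw [Real.norm_eq_abs, abs_of_pos (inv_pos.2 hρ0)]
      rw [div_le_iff₀ hρ0] at h4
      have hL2 : (0:ℝ) < 2 / L := by positivity
      calc ρ⁻¹ = 1 / ρ := (one_div ρ).symm
        _ ≤ (2 / L * h ρ * ρ) / ρ := by
            gcongr
            calc (1:ℝ) = 2 / L * (L / 2) := by field_simp
              _ ≤ 2 / L * (h ρ * ρ) := mul_le_mul_of_nonneg_left h4 hL2.le
              _ = 2 / L * h ρ * ρ := by ring
        _ = 2 / L * h ρ := by field_simp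
    exact not_IntegrableOn_Ioi_inv hinv
  have hcz : c = 0 := by
    by_contra hne
    have hcpos : 0 < c := lt_of_le_of_ne hcnn (Ne.symm hne)
    have hev : ∀ᶠ ρ in 𝓝[>] (0:ℝ), c / 2 < f ρ := hc0.eventually (eventually_gt_nhds (by linarith))
    obtain ⟨δ, hδ0, hδ⟩ := mem_nhdsGT_iff_exists_Ioc_subset.1 hev
    have hδpos : (0:ℝ) < δ := hδ0
    have hinv : IntegrableOn (fun ρ : ℝ => ρ⁻¹) (Ioc 0 δ) volume := by
      refine Integrable.mono' (((hint.mono_set Ioc_subset_Ioi_self).const_mul (2 / c)))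
        (measurable_inv.aestronglyMeasurable) ?_
      refine (ae_restrict_iff' measurableSet_Ioc).2 (Eventually.of_forall ?_)
      intro ρ hρ
      have hρ0 : (0:ℝ) < ρ := hρ.1
      have hf2 : c / 2 < f ρ := hδ hρ
      have h4 : (c / 2) / ρ ≤ h ρ := le_trans (by gcongr) (hfdivρ ρ hρ0)
      rw [Real.norm_eq_abs, abs_of_pos (inv_pos.2 hρ0)]
      rw [div_le_iff₀ hρ0] at h4
      have hc2 : (0:ℝ) < 2 / c := by positivity
      calc ρ⁻¹ = 1 / ρ := (one_div ρ).symm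
        _ ≤ (2 / c * h ρ * ρ) / ρ := by
            gcongr
            calc (1:ℝ) = 2 / c * (c / 2) := by field_simp
              _ ≤ 2 / c * (h ρ * ρ) := mul_le_mul_of_nonneg_left h4 hc2.le
              _ = 2 / c * h ρ * ρ := by ring
        _ = 2 / c * h ρ := by field_simp
    have hii : IntervalIntegrable (fun x : ℝ => x⁻¹) volume 0 δ :=
      (intervalIntegrable_iff_integrableOn_Ioc_of_le hδpos.le).2 hinv
    rcases intervalIntegrable_inv_iff.1 hii with h0 | h0
    · exact hδpos.ne h0
    · exact h0 left_mem_uIcc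
  -- pointwise bound
  have hbound : ∀ ρ ∈ Ioi (0:ℝ), f ρ ≤ ∫ x in Ioi (0:ℝ), h x := by
    intro ρ hρ
    have hρ0 : (0:ℝ) < ρ := hρ
    have hsplit : (∫ x in Ioi (0:ℝ), G x) =
        (∫ x in Ioc (0:ℝ) ρ, G x) + ∫ x in Ioi ρ, G x := by
      rw [← setIntegral_union (Ioc_disjoint_Ioi le_rfl) measurableSet_Ioi
        (hGint.integrableOn) (hGint.integrableOn), Ioc_union_Ioi_eq_Ioi hρ0.le]
    have hPρ : P ρ = ∫ x in Ioc (0:ℝ) ρ, G x := by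
      rw [hP]; exact intervalIntegral.integral_of_le hρ0.le
    have hG0 : (∫ x in Ioi (0:ℝ), G x) = 0 := by
      have := hLz; rw [hL, hcz, add_zero] at this; exact this
    have hfρ : f ρ = -∫ x in Ioi ρ, G x := by
      have := hfPc ρ hρ
      rw [hcz, add_zero, hPρ] at this
      rw [this]
      linarith [hsplit, hG0]
    rw [hfρ]
    have hmono1 : (-∫ x in Ioi ρ, G x) = ∫ x in Ioi ρ, -G x := (integral_neg G).symm ▸ rfl
    have h5 : (∫ x in Ioi ρ, -G x) ≤ ∫ x in Ioi ρ, h x := by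
      refine setIntegral_mono_on (hGint.integrableOn.neg)
        (hint.mono_set (Ioi_subset_Ioi hρ0.le)) measurableSet_Ioi ?_
      intro x hx
      have hx0 : x ∈ Ioi (0:ℝ) := lt_trans hρ0 hx
      have : ‖G x‖ ≤ h x := by rw [hG, indicator_of_mem hx0 g]; exact hgh x hx0
      have := (abs_le.1 (this.trans_eq' (Real.norm_eq_abs _).symm)).1
      linarith
    have h6 : (∫ x in Ioi ρ, h x) ≤ ∫ x in Ioi (0:ℝ), h x := by
      refine setIntegral_mono_set hint ?_ (HasSubset.Subset.eventuallyLE (Ioi_subset_Ioi hρ0.le))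
      exact (ae_restrict_iff' measurableSet_Ioi).2 (Eventually.of_forall hnn)
    calc (-∫ x in Ioi ρ, G x) = ∫ x in Ioi ρ, -G x := by rw [integral_neg]
      _ ≤ ∫ x in Ioi ρ, h x := h5
      _ ≤ ∫ x in Ioi (0:ℝ), h x := h6
  refine ⟨?_, ?_, ?_⟩
  · rw [show (0:ℂ) = 0 from rfl]
    refine tendsto_zero_iff_norm_tendsto_zero.2 ?_
    have h1 : Tendsto f (𝓝[>] (0:ℝ)) (𝓝 0) := hcz ▸ hc0
    have h2 := (Real.continuous_sqrt.tendsto 0).comp h1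
    simp only [Function.comp_def, Real.sqrt_zero] at h2
    exact h2.congr hfroot
  · refine tendsto_zero_iff_norm_tendsto_zero.2 ?_
    have h1 : Tendsto f atTop (𝓝 0) := hLz ▸ hLtop
    have h2 := (Real.continuous_sqrt.tendsto 0).comp h1
    simp only [Function.comp_def, Real.sqrt_zero] at h2
    exact h2.congr hfroot
  · intro ρ hρ
    rw [one_mul, ← hfroot ρ]
    exact Real.sqrt_le_sqrt (hbound ρ hρ)
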